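/- Let 0 ≤ L < 1, z₀ < z₁ in ℝ, let p_Z : [z₀, z₁] → ℝ_{≥0} be continuous with ∫_{z₀}^{z₁} p_Z(z) dz > 0, and let ψ̂ : [z₀, z₁] → ℝ be continuously differentiable with ψ̂′(z) > 1/(1−L) for all z ∈ [z₀, z₁]. Then among all piecewise continuously differentiable functions ψ : [z₀, z₁] → ℝ whose derivative satisfies 1/(1+L) ≤ ψ′(z) ≤ 1/(1−L) wherever it exists, the weighted squared distance ∫_{z₀}^{z₁} p_Z(z)·|ψ(z) − ψ̂(z)|² dz is minimized by the affine function ψ*(z) = z/(1−L) + c, where c = (∫_{z₀}^{z₁} p_Z(z̃)·ψ̂(z̃) dz̃ − (1/(1−L))·∫_{z₀}^{z₁} p_Z(z̃)·z̃ dz̃) / ∫_{z₀}^{z₁} p_Z(z̃) dz̃. -/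

import Mathlib

open MeasureTheory intervalIntegral

lemma antitone_aux_proj {a b : ℝ} {g : ℝ → ℝ} (S : Finset ℝ)
    (hg : ContinuousOn g (Set.Icc a b))
    (hd : ∀ x ∈ Set.Ioo a b \ (S : Set ℝ), ∃ d : ℝ, HasDerivAt g d x ∧ d ≤ 0) :
    AntitoneOn g (Set.Icc a b) := by
  have base : ∀ x ∈ Set.Icc a b, ∀ y ∈ Set.Icc a b, x ≤ y →
      (∀ t ∈ Set.Ioo x y, t ∉ S) → g y ≤ g x := by
    intro x hx y hy hxy hS
    have hsub : Set.Icc x y ⊆ Set.Icc a b := Set.Icc_subset_Icc hx.1 hy.2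
    have hanti : AntitoneOn g (Set.Icc x y) := by
      apply antitoneOn_of_deriv_nonpos (convex_Icc x y) (hg.mono hsub)
      · intro t ht
        rw [interior_Icc] at ht
        obtain ⟨d, hdd, -⟩ := hd t ⟨⟨lt_of_le_of_lt hx.1 ht.1, lt_of_lt_of_le ht.2 hy.2⟩, hS t ht⟩
        exact hdd.differentiableAt.differentiableWithinAt
      · intro t ht
        rw [interior_Icc] at ht
        obtain ⟨d, hdd, hdle⟩ := hd t
          ⟨⟨lt_of_le_of_lt hx.1 ht.1, lt_of_lt_of_le ht.2 hy.2⟩, hS t ht⟩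
        rw [hdd.deriv]; exact hdle
    exact hanti (Set.left_mem_Icc.2 hxy) (Set.right_mem_Icc.2 hxy) hxy
  have key : ∀ n : ℕ, ∀ x ∈ Set.Icc a b, ∀ y ∈ Set.Icc a b, x ≤ y →
      (S.filter (· ∈ Set.Ioo x y)).card ≤ n → g y ≤ g x := by
    intro n
    induction n with
    | zero =>
      intro x hx y hy hxy hcard
      refine base x hx y hy hxy fun t ht hts => ?_
      have hmem : t ∈ S.filter (· ∈ Set.Ioo x y) := Finset.mem_filter.2 ⟨hts, ht⟩
      rw [Finset.card_eq_zero.1 (Nat.le_zero.1 hcard)] at hmem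
      exact absurd hmem (Finset.notMem_empty t)
    | succ n ih =>
      intro x hx y hy hxy hcard
      rcases Finset.eq_empty_or_nonempty (S.filter (· ∈ Set.Ioo x y)) with he | ⟨s, hs⟩
      · refine base x hx y hy hxy fun t ht hts => ?_
        have hmem : t ∈ S.filter (· ∈ Set.Ioo x y) := Finset.mem_filter.2 ⟨hts, ht⟩
        rw [he] at hmem
        exact absurd hmem (Finset.notMem_empty t)
      · rw [Finset.mem_filter] at hs
        obtain ⟨hsS, hsIoo⟩ := hs
        have hsab : s ∈ Set.Icc a b := ⟨le_trans hx.1 hsIoo.1.le, le_trans hsIoo.2.le hy.2⟩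
        have hcard' : ∀ u v : ℝ, Set.Ioo u v ⊆ Set.Ioo x y → s ∉ Set.Ioo u v →
            (S.filter (· ∈ Set.Ioo u v)).card ≤ n := by
          intro u v huv hsuv
          have hsub2 : S.filter (· ∈ Set.Ioo u v) ⊆ (S.filter (· ∈ Set.Ioo x y)).erase s := by
            intro t ht
            rw [Finset.mem_filter] at ht
            refine Finset.mem_erase.2 ⟨?_, Finset.mem_filter.2 ⟨ht.1, huv ht.2⟩⟩
            rintro rfl; exact hsuv ht.2
          calc (S.filter (· ∈ Set.Ioo u v)).card
              ≤ ((S.filter (· ∈ Set.Ioo x y)).erase s).card := Finset.card_le_card hsub2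
            _ = (S.filter (· ∈ Set.Ioo x y)).card - 1 :=
                Finset.card_erase_of_mem (Finset.mem_filter.2 ⟨hsS, hsIoo⟩)
            _ ≤ n := by omega
        have h1 : g s ≤ g x := ih x hx s hsab hsIoo.1.le
          (hcard' x s (Set.Ioo_subset_Ioo_right hsIoo.2.le) (fun h => lt_irrefl s h.2))
        have h2 : g y ≤ g s := ih s hsab y hy hsIoo.2.le
          (hcard' s y (Set.Ioo_subset_Ioo_left hsIoo.1.le) (fun h => lt_irrefl s h.1))
        exact h2.trans h1
  intro x hx y hy hxy
  exact key (S.filter (· ∈ Set.Ioo x y)).card x hx y hy hxy le_rfl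

/-- **Constrained projection of a steep target (optimal-control example).** Let
`0 ≤ L < 1`, `z₀ < z₁`, `p_Z ≥ 0` continuous on `[z₀, z₁]` with positive
integral, and let `ψ̂` be continuously differentiable on `[z₀, z₁]` with
`ψ̂′ > 1/(1-L)` there. Among all continuous, piecewise continuously
differentiable `ψ` on `[z₀, z₁]` whose derivative (wherever it exists, i.e.
off a finite set) lies in `[1/(1+L), 1/(1-L)]`, the weighted squared distance
`∫ p_Z (ψ - ψ̂)²` is minimized by the affine function
`ψ*(z) = z/(1-L) + c` with
`c = (∫ p_Z ψ̂ - (1/(1-L)) ∫ p_Z z dz) / ∫ p_Z`. -/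
theorem projection_of_steep_posterior_mean
    (L z₀ z₁ : ℝ) (hL0 : 0 ≤ L) (hL1 : L < 1) (hz : z₀ < z₁)
    (pZ : ℝ → ℝ) (hpZcont : ContinuousOn pZ (Set.Icc z₀ z₁))
    (hpZnonneg : ∀ z ∈ Set.Icc z₀ z₁, 0 ≤ pZ z)
    (hpZpos : 0 < ∫ z in z₀..z₁, pZ z)
    (ψhat ψhat' : ℝ → ℝ)
    (hψhatderiv : ∀ z ∈ Set.Icc z₀ z₁,
      HasDerivWithinAt ψhat (ψhat' z) (Set.Icc z₀ z₁) z)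
    (hψhat'cont : ContinuousOn ψhat' (Set.Icc z₀ z₁))
    (hψhat'big : ∀ z ∈ Set.Icc z₀ z₁, 1 / (1 - L) < ψhat' z) :
    ∀ ψ : ℝ → ℝ, ContinuousOn ψ (Set.Icc z₀ z₁) →
      (∃ S : Finset ℝ, ∀ z ∈ Set.Icc z₀ z₁ \ (S : Set ℝ),
        ∃ d : ℝ, HasDerivWithinAt ψ d (Set.Icc z₀ z₁) z ∧
          1 / (1 + L) ≤ d ∧ d ≤ 1 / (1 - L)) →
      (∫ z in z₀..z₁, pZ z *
          (z / (1 - L) +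
              ((∫ y in z₀..z₁, pZ y * ψhat y) -
                (1 / (1 - L)) * ∫ y in z₀..z₁, pZ y * y) /
                (∫ y in z₀..z₁, pZ y) -
            ψhat z) ^ 2) ≤
        ∫ z in z₀..z₁, pZ z * (ψ z - ψhat z) ^ 2 := by
  intro ψ hψcont hψderiv
  obtain ⟨S, hS⟩ := hψderiv
  have h1L : (0:ℝ) < 1 - L := by linarith
  set I := ∫ y in z₀..z₁, pZ y with hIdef
  set A := ∫ y in z₀..z₁, pZ y * ψhat y with hAdef
  set B := ∫ y in z₀..z₁, pZ y * y with hBdef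
  set c := (A - 1 / (1 - L) * B) / I with hcdef
  have hI0 : I ≠ 0 := ne_of_gt hpZpos
  set f := fun z : ℝ => z / (1 - L) + c - ψhat z with hf
  set g := fun z : ℝ => ψ z - (z / (1 - L) + c) with hg
  -- basic continuity facts
  have hψhatcont : ContinuousOn ψhat (Set.Icc z₀ z₁) :=
    fun z hz' => (hψhatderiv z hz').continuousWithinAt
  have haff : ContinuousOn (fun z : ℝ => z / (1 - L) + c) (Set.Icc z₀ z₁) :=
    Continuous.continuousOn (by continuity)
  have hfcont : ContinuousOn f (Set.Icc z₀ z₁) := haff.sub hψhatcont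
  have hgcont : ContinuousOn g (Set.Icc z₀ z₁) := hψcont.sub haff
  have hInt : ∀ F : ℝ → ℝ, ContinuousOn F (Set.Icc z₀ z₁) →
      IntervalIntegrable F volume z₀ z₁ := by
    intro F h
    exact ContinuousOn.intervalIntegrable (by rwa [Set.uIcc_of_le hz.le])
  -- derivative of the affine part
  have haffd : ∀ x : ℝ, HasDerivAt (fun z : ℝ => z / (1 - L) + c) (1 / (1 - L)) x := by
    intro x
    simpa using ((hasDerivAt_id x).div_const (1 - L)).add_const c
  -- f is antitone
  have hfanti : AntitoneOn f (Set.Icc z₀ z₁) := by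
    apply antitone_aux_proj (∅ : Finset ℝ) hfcont
    rintro x ⟨hxIoo, -⟩
    have hxIcc : x ∈ Set.Icc z₀ z₁ := Set.Ioo_subset_Icc_self hxIoo
    have hmem : Set.Icc z₀ z₁ ∈ nhds x := Icc_mem_nhds hxIoo.1 hxIoo.2
    have hd1 : HasDerivAt ψhat (ψhat' x) x := (hψhatderiv x hxIcc).hasDerivAt hmem
    refine ⟨1 / (1 - L) - ψhat' x, ?_, ?_⟩
    · rw [hf]; exact (haffd x).sub hd1
    · have := hψhat'big x hxIcc; linarith
  -- g is antitone
  have hganti : AntitoneOn g (Set.Icc z₀ z₁) := by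
    apply antitone_aux_proj S hgcont
    rintro x ⟨hxIoo, hxS⟩
    have hxIcc : x ∈ Set.Icc z₀ z₁ := Set.Ioo_subset_Icc_self hxIoo
    obtain ⟨d, hdw, hd1, hd2⟩ := hS x ⟨hxIcc, hxS⟩
    have hdψ : HasDerivAt ψ d x := hdw.hasDerivAt (Icc_mem_nhds hxIoo.1 hxIoo.2)
    refine ⟨d - 1 / (1 - L), ?_, by linarith⟩
    rw [hg]; exact hdψ.sub (haffd x)
  -- integrability
  have hintp : IntervalIntegrable pZ volume z₀ z₁ := hInt _ hpZcont
  have hintpz : IntervalIntegrable (fun z => pZ z * z) volume z₀ z₁ :=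
    hInt _ (hpZcont.mul continuousOn_id)
  have hintpψ : IntervalIntegrable (fun z => pZ z * ψhat z) volume z₀ z₁ :=
    hInt _ (hpZcont.mul hψhatcont)
  have hintpf : IntervalIntegrable (fun z => pZ z * f z) volume z₀ z₁ :=
    hInt _ (hpZcont.mul hfcont)
  -- ∫ p f = 0
  have hIc : I * c = A - 1 / (1 - L) * B := by
    rw [hcdef]; field_simp
  have hpf : (∫ z in z₀..z₁, pZ z * f z) = 0 := by
    have e : (fun z => pZ z * f z) =
        fun z => pZ z * z * (1 / (1 - L)) + (pZ z * c - pZ z * ψhat z) := by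
      funext z; simp only [hf]; ring
    rw [e, intervalIntegral.integral_add (hintpz.mul_const _)
        ((hintp.mul_const c).sub hintpψ),
      intervalIntegral.integral_sub (hintp.mul_const c) hintpψ,
      intervalIntegral.integral_mul_const, intervalIntegral.integral_mul_const]
    have : (∫ y in z₀..z₁, pZ y * y) = B := rfl
    linarith [hIc]
  -- boundary signs of f
  have hfz₀ : 0 ≤ f z₀ := by
    by_contra h
    push_neg at h
    have hle : (∫ z in z₀..z₁, pZ z * f z) ≤ ∫ z in z₀..z₁, pZ z * f z₀ := by
      apply intervalIntegral.integral_mono_on hz.le hintpf (hintp.mul_const _)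
      intro x hx
      exact mul_le_mul_of_nonneg_left
        (hfanti (Set.left_mem_Icc.2 hz.le) hx hx.1) (hpZnonneg x hx)
    rw [hpf, intervalIntegral.integral_mul_const] at hle
    nlinarith
  have hfz₁ : f z₁ ≤ 0 := by
    by_contra h
    push_neg at h
    have hle : (∫ z in z₀..z₁, pZ z * f z₁) ≤ ∫ z in z₀..z₁, pZ z * f z := by
      apply intervalIntegral.integral_mono_on hz.le (hintp.mul_const _) hintpf
      intro x hx
      exact mul_le_mul_of_nonneg_left
        (hfanti hx (Set.right_mem_Icc.2 hz.le) hx.2) (hpZnonneg x hx)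
    rw [hpf, intervalIntegral.integral_mul_const] at hle
    nlinarith
  -- intermediate value: f vanishes somewhere
  obtain ⟨zs, hzs, hfzs⟩ :=
    intermediate_value_Icc' hz.le hfcont (Set.mem_Icc.2 ⟨hfz₁, hfz₀⟩)
  set γ := g zs with hγ
  -- pointwise key inequality
  have hkey : ∀ x ∈ Set.Icc z₀ z₁,
      (2 * γ) * (pZ x * f x) ≤ pZ x * (2 * f x * g x + g x ^ 2) := by
    intro x hx
    have hp := hpZnonneg x hx
    have hfg : 0 ≤ f x * (g x - γ) := by
      rcases le_total x zs with h | h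
      · have h1 : f zs ≤ f x := hfanti hx hzs h
        rw [hfzs] at h1
        have h2 : γ ≤ g x := hganti hx hzs h
        exact mul_nonneg h1 (by linarith)
      · have h1 : f x ≤ f zs := hfanti hzs hx h
        rw [hfzs] at h1
        have h2 : g x ≤ γ := hganti hzs hx h
        nlinarith [mul_nonneg (neg_nonneg.2 h1) (sub_nonneg.2 h2)]
    nlinarith [mul_nonneg hp hfg, mul_nonneg hp (sq_nonneg (g x))]
  -- the cross+square term is nonnegative
  have hIg : IntervalIntegrable (fun z => pZ z * (2 * f z * g z + g z ^ 2)) volume z₀ z₁ :=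
    hInt _ (hpZcont.mul (((continuousOn_const.mul hfcont).mul hgcont).add (hgcont.pow 2)))
  have hmono : (∫ z in z₀..z₁, (2 * γ) * (pZ z * f z)) ≤
      ∫ z in z₀..z₁, pZ z * (2 * f z * g z + g z ^ 2) :=
    intervalIntegral.integral_mono_on hz.le (hintpf.const_mul _) hIg hkey
  have hleft : (∫ z in z₀..z₁, (2 * γ) * (pZ z * f z)) = 0 := by
    rw [intervalIntegral.integral_const_mul, hpf, mul_zero]
  have hR : 0 ≤ ∫ z in z₀..z₁, pZ z * (2 * f z * g z + g z ^ 2) := by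
    rw [← hleft]; exact hmono
  -- split the right-hand side
  have hsplit : (∫ z in z₀..z₁, pZ z * (f z + g z) ^ 2) =
      (∫ z in z₀..z₁, pZ z * f z ^ 2) +
        ∫ z in z₀..z₁, pZ z * (2 * f z * g z + g z ^ 2) := by
    rw [← intervalIntegral.integral_add (hInt (fun z => pZ z * f z ^ 2) (hpZcont.mul (hfcont.pow 2))) hIg]
    congr 1
    funext z
    ring
  have eL : (∫ z in z₀..z₁, pZ z * (z / (1 - L) + c - ψhat z) ^ 2) =
      ∫ z in z₀..z₁, pZ z * f z ^ 2 := rfl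
  have eR : (∫ z in z₀..z₁, pZ z * (ψ z - ψhat z) ^ 2) =
      ∫ z in z₀..z₁, pZ z * (f z + g z) ^ 2 := by
    congr 1
    funext z
    simp only [hf, hg]
    ring
  rw [eL, eR, hsplit]
  linarith
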